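/- arXiv:2004.06758 — 3 statements merged into one kernel-verified Lean document; each statement's English description precedes it below -/
import Mathlib

section
/- Let a, λ, c₀, r₁, r₂, α₃ be complex numbers with λ ≠ 0 and c₀ ≠ 0, and set p = (λ² − a·r₁²)/(i·λ·c₀), q = (λ² + a·r₂²)/(i·λ·c₀). Let M₁ be the 4×4 complex matrix with rows: row 1 = (sin(r₁α₃), cos(r₁α₃), cosh(r₂α₃), sinh(r₂α₃)); row 2 = (r₁cos(r₁α₃), −r₁sin(r₁α₃), r₂sinh(r₂α₃), r₂cosh(r₂α₃)); row 3 = (p·sin(r₁α₃), p·cos(r₁α₃), q·cosh(r₂α₃), q·sinh(r₂α₃)); row 4 = (p·r₁cos(r₁α₃), −p·r₁sin(r₁α₃), q·r₂sinh(r₂α₃), q·r₂cosh(r₂α₃)). Then det(M₁) = r₁·r₂·a²·(r₁² + r₂²)²/(λ²·c₀²). -/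
open Complex

theorem my_det_fin_four (M : Matrix (Fin 4) (Fin 4) ℂ) :
    M.det =
      M 0 0 * (M 1 1 * (M 2 2 * M 3 3 - M 2 3 * M 3 2) - M 1 2 * (M 2 1 * M 3 3 - M 2 3 * M 3 1) + M 1 3 * (M 2 1 * M 3 2 - M 2 2 * M 3 1))
    - M 0 1 * (M 1 0 * (M 2 2 * M 3 3 - M 2 3 * M 3 2) - M 1 2 * (M 2 0 * M 3 3 - M 2 3 * M 3 0) + M 1 3 * (M 2 0 * M 3 2 - M 2 2 * M 3 0))
    + M 0 2 * (M 1 0 * (M 2 1 * M 3 3 - M 2 3 * M 3 1) - M 1 1 * (M 2 0 * M 3 3 - M 2 3 * M 3 0) + M 1 3 * (M 2 0 * M 3 1 - M 2 1 * M 3 0))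
    - M 0 3 * (M 1 0 * (M 2 1 * M 3 2 - M 2 2 * M 3 1) - M 1 1 * (M 2 0 * M 3 2 - M 2 2 * M 3 0) + M 1 2 * (M 2 0 * M 3 1 - M 2 1 * M 3 0)) := by
  have h1 : (Fin.succ 2 : Fin 4) = 3 := rfl
  have h2 : (Fin.castSucc 2 : Fin 4) = 2 := rfl
  have h3 : ((if (1:Fin 4) < Fin.succ 2 then (1:Fin 4) else 2) : Fin 4) = 1 := rfl
  simp [Matrix.det_succ_row_zero, Fin.sum_univ_succ, Fin.succAbove, h1, h2, h3]
  ring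

/-- determinant of the boundary-condition matrix M₁ (case λ² < c₀²). -/
theorem stmt5 (a lam c₀ r₁ r₂ α₃ : ℂ) (hlam : lam ≠ 0) (hc : c₀ ≠ 0)
    (p q : ℂ)
    (hp : p = (lam ^ 2 - a * r₁ ^ 2) / (Complex.I * lam * c₀))
    (hq : q = (lam ^ 2 + a * r₂ ^ 2) / (Complex.I * lam * c₀)) :
    Matrix.det
      !![Complex.sin (r₁ * α₃), Complex.cos (r₁ * α₃), Complex.cosh (r₂ * α₃), Complex.sinh (r₂ * α₃);
         r₁ * Complex.cos (r₁ * α₃), -(r₁ * Complex.sin (r₁ * α₃)), r₂ * Complex.sinh (r₂ * α₃), r₂ * Complex.cosh (r₂ * α₃);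
         p * Complex.sin (r₁ * α₃), p * Complex.cos (r₁ * α₃), q * Complex.cosh (r₂ * α₃), q * Complex.sinh (r₂ * α₃);
         p * r₁ * Complex.cos (r₁ * α₃), -(p * r₁ * Complex.sin (r₁ * α₃)), q * r₂ * Complex.sinh (r₂ * α₃), q * r₂ * Complex.cosh (r₂ * α₃)]
      = r₁ * r₂ * a ^ 2 * (r₁ ^ 2 + r₂ ^ 2) ^ 2 / (lam ^ 2 * c₀ ^ 2) := by
  have hs : Complex.sin (r₁ * α₃) ^ 2 + Complex.cos (r₁ * α₃) ^ 2 = 1 :=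
    Complex.sin_sq_add_cos_sq _
  have hch : Complex.cosh (r₂ * α₃) ^ 2 - Complex.sinh (r₂ * α₃) ^ 2 = 1 :=
    Complex.cosh_sq_sub_sinh_sq _
  have hdet : Matrix.det
      !![Complex.sin (r₁ * α₃), Complex.cos (r₁ * α₃), Complex.cosh (r₂ * α₃), Complex.sinh (r₂ * α₃);
         r₁ * Complex.cos (r₁ * α₃), -(r₁ * Complex.sin (r₁ * α₃)), r₂ * Complex.sinh (r₂ * α₃), r₂ * Complex.cosh (r₂ * α₃);
         p * Complex.sin (r₁ * α₃), p * Complex.cos (r₁ * α₃), q * Complex.cosh (r₂ * α₃), q * Complex.sinh (r₂ * α₃);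
         p * r₁ * Complex.cos (r₁ * α₃), -(p * r₁ * Complex.sin (r₁ * α₃)), q * r₂ * Complex.sinh (r₂ * α₃), q * r₂ * Complex.cosh (r₂ * α₃)]
      = -(r₁ * r₂) * (q - p) ^ 2 := by
    rw [my_det_fin_four]
    norm_num [Matrix.cons_val_zero, Matrix.cons_val_one, Matrix.head_cons, Matrix.cons_val_two, Matrix.cons_val_three, Matrix.tail_cons, Matrix.vecHead, Matrix.vecTail]
    linear_combination (-(r₁ * r₂) * (q - p) ^ 2 * (Complex.cosh (r₂ * α₃) ^ 2 - Complex.sinh (r₂ * α₃) ^ 2)) * hs + (-(r₁ * r₂) * (q - p) ^ 2) * hch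
  rw [hdet, hp, hq]
  have hI2 : Complex.I ^ 2 = -1 := Complex.I_sq
  have hI : Complex.I ≠ 0 := Complex.I_ne_zero
  field_simp
  linear_combination (-(r₁ * r₂ * a ^ 2 * (r₁ ^ 2 + r₂ ^ 2) ^ 2)) * hI2
end

section
/- Let a, λ, c₀, r₁, α₃ be complex numbers with λ ≠ 0 and c₀ ≠ 0, and set p = (λ² − a·r₁²)/(i·λ·c₀), q = λ/(i·c₀). Let M₂ be the 4×4 complex matrix with rows: row 1 = (sin(r₁α₃), cos(r₁α₃), α₃, 1); row 2 = (r₁cos(r₁α₃), −r₁sin(r₁α₃), 1, 0); row 3 = (p·sin(r₁α₃), p·cos(r₁α₃), q·α₃, q); row 4 = (p·r₁cos(r₁α₃), −p·r₁sin(r₁α₃), q, 0). Then det(M₂) = −a²·r₁⁵/(λ²·c₀²). -/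
open Complex

lemma aux_det_fin_four (s c r al p q : ℂ) (h : s ^ 2 + c ^ 2 = 1) :
    Matrix.det !![s, c, al, 1; r * c, -(r * s), 1, 0;
      p * s, p * c, q * al, q; p * r * c, -(p * r * s), q, 0]
    = r * (q - p) ^ 2 := by
  simp [Matrix.det_succ_row_zero, Fin.sum_univ_succ,
    show (Fin.succAbove 1 2 : Fin 4) = 3 from rfl, show (Fin.succAbove 2 2 : Fin 4) = 3 from rfl,
    show (Fin.succAbove 3 2 : Fin 4) = 2 from rfl]
  linear_combination (r * (q - p) ^ 2) * h

/-- determinant of the boundary-condition matrix M₂ (degenerate case λ² = c₀²). -/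
theorem stmt6 (a lam c₀ r₁ α₃ : ℂ) (hlam : lam ≠ 0) (hc : c₀ ≠ 0)
    (p q : ℂ)
    (hp : p = (lam ^ 2 - a * r₁ ^ 2) / (Complex.I * lam * c₀))
    (hq : q = lam / (Complex.I * c₀)) :
    Matrix.det
      !![Complex.sin (r₁ * α₃), Complex.cos (r₁ * α₃), α₃, 1;
         r₁ * Complex.cos (r₁ * α₃), -(r₁ * Complex.sin (r₁ * α₃)), 1, 0;
         p * Complex.sin (r₁ * α₃), p * Complex.cos (r₁ * α₃), q * α₃, q;
         p * r₁ * Complex.cos (r₁ * α₃), -(p * r₁ * Complex.sin (r₁ * α₃)), q, 0]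
      = -(a ^ 2 * r₁ ^ 5) / (lam ^ 2 * c₀ ^ 2) := by
  rw [aux_det_fin_four _ _ _ _ _ _ (Complex.sin_sq_add_cos_sq (r₁ * α₃)), hp, hq]
  have hI := Complex.I_ne_zero
  field_simp
  linear_combination (r₁ ^ 5 * a ^ 2) * Complex.I_sq
end

section
/- Let a, λ, c₀, r₁, r₂, α₃ be complex numbers with λ ≠ 0 and c₀ ≠ 0, and set p = (λ² − a·r₁²)/(i·λ·c₀), q = (λ² − a·r₂²)/(i·λ·c₀). Let M₃ be the 4×4 complex matrix with rows: row 1 = (sin(r₁α₃), cos(r₁α₃), sin(r₂α₃), cos(r₂α₃)); row 2 = (r₁cos(r₁α₃), −r₁sin(r₁α₃), r₂cos(r₂α₃), −r₂sin(r₂α₃)); row 3 = (p·sin(r₁α₃), p·cos(r₁α₃), q·sin(r₂α₃), q·cos(r₂α₃)); row 4 = (p·r₁cos(r₁α₃), −p·r₁sin(r₁α₃), q·r₂cos(r₂α₃), −q·r₂sin(r₂α₃)). Then det(M₃) = −r₁·r₂·a²·(r₁² − r₂²)²/(λ²·c₀²). -/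
set_option maxHeartbeats 1000000

open Complex

lemma det4_aux (p q r₁ r₂ s1 c1 s2 c2 : ℂ) (h1 : s1 ^ 2 + c1 ^ 2 = 1)
    (h2 : s2 ^ 2 + c2 ^ 2 = 1) :
    Matrix.det
      !![s1, c1, s2, c2;
         r₁ * c1, -(r₁ * s1), r₂ * c2, -(r₂ * s2);
         p * s1, p * c1, q * s2, q * c2;
         p * r₁ * c1, -(p * r₁ * s1), q * r₂ * c2, -(q * r₂ * s2)]
      = r₁ * r₂ * (q - p) ^ 2 := by
  simp [Matrix.det_succ_row_zero, Fin.sum_univ_succ, Fin.succAbove, Fin.castSucc, Fin.castAdd, Fin.castLE]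
  ring_nf
  linear_combination (r₁ * r₂ * (q - p) ^ 2 * (s2 ^ 2 + c2 ^ 2)) * h1 +
    (r₁ * r₂ * (q - p) ^ 2) * h2

/-- determinant of the boundary-condition matrix M₃ (case λ² > c₀²). -/
theorem stmt7 (a lam c₀ r₁ r₂ α₃ : ℂ) (hlam : lam ≠ 0) (hc : c₀ ≠ 0)
    (p q : ℂ)
    (hp : p = (lam ^ 2 - a * r₁ ^ 2) / (Complex.I * lam * c₀))
    (hq : q = (lam ^ 2 - a * r₂ ^ 2) / (Complex.I * lam * c₀)) :
    Matrix.det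
      !![Complex.sin (r₁ * α₃), Complex.cos (r₁ * α₃), Complex.sin (r₂ * α₃), Complex.cos (r₂ * α₃);
         r₁ * Complex.cos (r₁ * α₃), -(r₁ * Complex.sin (r₁ * α₃)), r₂ * Complex.cos (r₂ * α₃), -(r₂ * Complex.sin (r₂ * α₃));
         p * Complex.sin (r₁ * α₃), p * Complex.cos (r₁ * α₃), q * Complex.sin (r₂ * α₃), q * Complex.cos (r₂ * α₃);
         p * r₁ * Complex.cos (r₁ * α₃), -(p * r₁ * Complex.sin (r₁ * α₃)), q * r₂ * Complex.cos (r₂ * α₃), -(q * r₂ * Complex.sin (r₂ * α₃))]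
      = -(r₁ * r₂ * a ^ 2 * (r₁ ^ 2 - r₂ ^ 2) ^ 2) / (lam ^ 2 * c₀ ^ 2) := by
  rw [det4_aux p q r₁ r₂ _ _ _ _ (Complex.sin_sq_add_cos_sq _) (Complex.sin_sq_add_cos_sq _),
    hp, hq]
  have hI : Complex.I ≠ 0 := Complex.I_ne_zero
  have hI2 : Complex.I ^ 2 = -1 := Complex.I_sq
  field_simp
  linear_combination (r₁ * r₂ * (a * r₁ ^ 2 - a * r₂ ^ 2) ^ 2) * hI2
end
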